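/- Define, for positive reals r_i, r_j, r_k, r_h with t_ν = tanh r_ν, the dihedral angles β_{ij,kh} = arccos((2 − t_i^2 − t_j^2 + t_it_k + t_it_h + t_jt_k + t_jt_h)/(2√(λ_1λ_2))), β_{ik,jh} = arccos((2 − t_i^2 − t_k^2 + t_it_j + t_it_h + t_kt_j + t_kt_h)/(2√(λ_1λ_3))), β_{ih,jk} = arccos((2 − t_i^2 − t_h^2 + t_it_j + t_it_k + t_ht_j + t_ht_k)/(2√(λ_2λ_3))), where λ_1 = t_it_j + t_it_k + t_jt_k + 1, λ_2 = t_it_j + t_it_h + t_jt_h + 1, λ_3 = t_it_k + t_it_h + t_kt_h + 1, and set Area(Δ_i) = π − β_{ij,kh} − β_{ik,jh} − β_{ih,jk}. Then for fixed r_i, r_k, r_h > 0, the function r_j ↦ Area(Δ_i) has, at every r_j > 0, derivative equal to −cosh r_k · cosh r_h · [2 − (t_k − t_h)^2 + t_i(t_j + t_k + t_h) + t_j(t_i + t_k + t_h)] / (√Q_2 · cosh(r_i + r_j + r_k) · cosh(r_i + r_j + r_h)), where Q_2 = (t_i+t_j+t_k+t_h)^2 − 2(t_i^2+t_j^2+t_k^2+t_h^2)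 + 4. -/

import Mathlib

open Real

lemma tanh_hasDerivAt' (x : ℝ) : HasDerivAt Real.tanh (1 - Real.tanh x ^ 2) x := by
  have h := (Real.hasDerivAt_sinh x).div (Real.hasDerivAt_cosh x) (Real.cosh_pos x).ne'
  have hfun : (fun y => Real.sinh y / Real.cosh y) = Real.tanh := by
    funext y; rw [Real.tanh_eq_sinh_div_cosh]
  rw [show (Real.sinh / Real.cosh) = Real.tanh from hfun] at h
  refine h.congr_deriv ?_
  have hc := (Real.cosh_pos x).ne'
  rw [Real.tanh_eq_sinh_div_cosh]
  field_simp

lemma tanh_pos' {x : ℝ} (hx : 0 < x) : 0 < Real.tanh x := by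
  rw [Real.tanh_eq_sinh_div_cosh]
  exact div_pos (by rwa [Real.sinh_pos_iff]) (Real.cosh_pos x)

lemma tanh_lt_one' (x : ℝ) : Real.tanh x < 1 := by
  rw [Real.tanh_eq_sinh_div_cosh, div_lt_one (Real.cosh_pos x)]
  nlinarith [Real.cosh_sub_sinh x, Real.exp_pos (-x)]

lemma one_sub_tanh_sq (x : ℝ) : 1 - Real.tanh x ^ 2 = 1 / Real.cosh x ^ 2 := by
  have hc := (Real.cosh_pos x).ne'
  rw [Real.tanh_eq_sinh_div_cosh]
  field_simp
  linarith [Real.cosh_sq_sub_sinh_sq x]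

lemma cosh_add3 (a b c : ℝ) : Real.cosh (a + b + c) =
    Real.cosh a * Real.cosh b * Real.cosh c *
      (Real.tanh a * Real.tanh b + Real.tanh a * Real.tanh c + Real.tanh b * Real.tanh c + 1) := by
  have ha := (Real.cosh_pos a).ne'
  have hb := (Real.cosh_pos b).ne'
  have hc := (Real.cosh_pos c).ne'
  rw [Real.cosh_add, Real.cosh_add, Real.sinh_add]
  simp only [Real.tanh_eq_sinh_div_cosh]
  field_simp
  ring
lemma aux_arccos (a0 a1 a2 b0 b1 b2 Q s r : ℝ)
    (hP : 0 < b0 + b1 * Real.tanh r + b2 * Real.tanh r ^ 2)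
    (hQ : 0 < Q) (hs : 0 < s)
    (hkey : 4 * (b0 + b1 * Real.tanh r + b2 * Real.tanh r ^ 2)
        - (a0 + a1 * Real.tanh r + a2 * Real.tanh r ^ 2) ^ 2 = Q * s ^ 2) :
    HasDerivAt
      (fun x : ℝ => arccos ((a0 + a1 * Real.tanh x + a2 * Real.tanh x ^ 2) /
        (2 * Real.sqrt (b0 + b1 * Real.tanh x + b2 * Real.tanh x ^ 2))))
      (-((2 * (a1 + 2 * a2 * Real.tanh r) * (b0 + b1 * Real.tanh r + b2 * Real.tanh r ^ 2)
          - (a0 + a1 * Real.tanh r + a2 * Real.tanh r ^ 2) * (b1 + 2 * b2 * Real.tanh r))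
          * (1 - Real.tanh r ^ 2)) /
        (2 * (b0 + b1 * Real.tanh r + b2 * Real.tanh r ^ 2) * s * Real.sqrt Q)) r := by
  have ht := tanh_hasDerivAt' r
  set t := Real.tanh r with htdef
  set P := b0 + b1 * t + b2 * t ^ 2 with hPdef
  set A := a0 + a1 * t + a2 * t ^ 2 with hAdef
  have hA : HasDerivAt (fun x : ℝ => a0 + a1 * Real.tanh x + a2 * Real.tanh x ^ 2)
      ((a1 + 2 * a2 * t) * (1 - t ^ 2)) r := by
    have := ((hasDerivAt_const r a0).add (ht.const_mul a1)).add ((ht.pow 2).const_mul a2)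
    refine this.congr_deriv ?_
    ring
  have hPd : HasDerivAt (fun x : ℝ => b0 + b1 * Real.tanh x + b2 * Real.tanh x ^ 2)
      ((b1 + 2 * b2 * t) * (1 - t ^ 2)) r := by
    have := ((hasDerivAt_const r b0).add (ht.const_mul b1)).add ((ht.pow 2).const_mul b2)
    refine this.congr_deriv ?_
    ring
  have hsP : 0 < Real.sqrt P := Real.sqrt_pos.mpr hP
  have hsP2 : Real.sqrt P ^ 2 = P := Real.sq_sqrt hP.le
  have hsQ : 0 < Real.sqrt Q := Real.sqrt_pos.mpr hQ
  have hsQ2 : Real.sqrt Q ^ 2 = Q := Real.sq_sqrt hQ.le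
  have hsqrt : HasDerivAt (fun x : ℝ => Real.sqrt (b0 + b1 * Real.tanh x + b2 * Real.tanh x ^ 2))
      ((b1 + 2 * b2 * t) * (1 - t ^ 2) / (2 * Real.sqrt P)) r := hPd.sqrt hP.ne'
  have hden : (2 : ℝ) * Real.sqrt P ≠ 0 := by positivity
  have hu : HasDerivAt (fun x : ℝ => (a0 + a1 * Real.tanh x + a2 * Real.tanh x ^ 2) /
      (2 * Real.sqrt (b0 + b1 * Real.tanh x + b2 * Real.tanh x ^ 2)))
      (((a1 + 2 * a2 * t) * (1 - t ^ 2) * (2 * Real.sqrt P)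
        - A * (2 * ((b1 + 2 * b2 * t) * (1 - t ^ 2) / (2 * Real.sqrt P)))) / (2 * Real.sqrt P) ^ 2)
      r := hA.div (hsqrt.const_mul 2) hden
  set u := A / (2 * Real.sqrt P) with hudef
  have h1u : 1 - u ^ 2 = Q * s ^ 2 / (4 * P) := by
    rw [hudef, div_pow, mul_pow, hsP2]
    field_simp
    linear_combination 4 * hkey
  have h1upos : 0 < 1 - u ^ 2 := by rw [h1u]; positivity
  have hu1 : u ≠ 1 := by intro h; rw [h] at h1upos; norm_num at h1upos
  have hu2 : u ≠ -1 := by intro h; rw [h] at h1upos; norm_num at h1upos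
  have harc := (Real.hasDerivAt_arccos hu2 hu1).comp r hu
  have hsqrt1u : Real.sqrt (1 - u ^ 2) = Real.sqrt Q * s / (2 * Real.sqrt P) := by
    rw [h1u, show Q * s ^ 2 / (4 * P) = (Real.sqrt Q * s / (2 * Real.sqrt P)) ^ 2 by
      rw [div_pow, mul_pow, mul_pow, hsQ2, hsP2]; ring]
    exact Real.sqrt_sq (by positivity)
  refine harc.congr_deriv ?_
  rw [hsqrt1u]
  set sp := Real.sqrt P with hspdef
  rw [show P = sp ^ 2 from hsP2.symm]
  have hsp0 : sp ≠ 0 := hsP.ne'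
  field_simp

set_option maxHeartbeats 2000000 in
/-- Lemma 3.5 of the paper: the derivative of the area of the vertex triangle
`Area(Δ_i) = π − β_{ij,kh} − β_{ik,jh} − β_{ih,jk}` with respect to `r_j` equals
`− cosh r_k · cosh r_h · [2 − (t_k − t_h)² + t_i(t_j + t_k + t_h) + t_j(t_i + t_k + t_h)]
  / (√Q₂ · cosh(r_i+r_j+r_k) · cosh(r_i+r_j+r_h))`. -/
theorem deriv_area_rj (ri rj rk rh : ℝ)
    (hri : 0 < ri) (hrj : 0 < rj) (hrk : 0 < rk) (hrh : 0 < rh)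
    (ti tj tk th Q2 : ℝ)
    (hti : ti = tanh ri) (htj : tj = tanh rj) (htk : tk = tanh rk) (hth : th = tanh rh)
    (hQ2 : Q2 = (ti + tj + tk + th) ^ 2 - 2 * (ti ^ 2 + tj ^ 2 + tk ^ 2 + th ^ 2) + 4) :
    HasDerivAt
      (fun x : ℝ => π
        - arccos ((2 - ti ^ 2 - tanh x ^ 2 + ti * tk + ti * th + tanh x * tk + tanh x * th) /
            (2 * Real.sqrt ((ti * tanh x + ti * tk + tanh x * tk + 1) *
              (ti * tanh x + ti * th + tanh x * th + 1))))
        - arccos ((2 - ti ^ 2 - tk ^ 2 + ti * tanh x + ti * th + tk * tanh x + tk * th) /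
            (2 * Real.sqrt ((ti * tk + ti * tanh x + tk * tanh x + 1) *
              (ti * tk + ti * th + tk * th + 1))))
        - arccos ((2 - ti ^ 2 - th ^ 2 + ti * tanh x + ti * tk + th * tanh x + th * tk) /
            (2 * Real.sqrt ((ti * th + ti * tanh x + th * tanh x + 1) *
              (ti * th + ti * tk + th * tk + 1)))))
      (-(cosh rk * cosh rh *
          (2 - (tk - th) ^ 2 + ti * (tj + tk + th) + tj * (ti + tk + th))) /
        (Real.sqrt Q2 * cosh (ri + rj + rk) * cosh (ri + rj + rh)))
      rj := by
  -- bounds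
  have h0i : 0 < ti := hti ▸ tanh_pos' hri
  have h0j : 0 < tj := htj ▸ tanh_pos' hrj
  have h0k : 0 < tk := htk ▸ tanh_pos' hrk
  have h0h : 0 < th := hth ▸ tanh_pos' hrh
  have h1i : ti < 1 := hti ▸ tanh_lt_one' ri
  have h1j : tj < 1 := htj ▸ tanh_lt_one' rj
  have h1k : tk < 1 := htk ▸ tanh_lt_one' rk
  have h1h : th < 1 := hth ▸ tanh_lt_one' rh
  have hQ2pos : 0 < Q2 := by
    rw [hQ2, show (ti + tj + tk + th) ^ 2 - 2 * (ti ^ 2 + tj ^ 2 + tk ^ 2 + th ^ 2) + 4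
      = 2*(ti*tj+ti*tk+ti*th+tj*tk+tj*th+tk*th) + (1-ti^2)+(1-tj^2)+(1-tk^2)+(1-th^2) from by ring]
    have sqi : ti^2 < 1 := by nlinarith
    have sqj : tj^2 < 1 := by nlinarith
    have sqk : tk^2 < 1 := by nlinarith
    have sqh : th^2 < 1 := by nlinarith
    linarith [mul_pos h0i h0j, mul_pos h0i h0k, mul_pos h0i h0h, mul_pos h0j h0k, mul_pos h0j h0h, mul_pos h0k h0h]
  -- first arccos term
  have hP1 : 0 < (ti*tk+1)*(ti*th+1) + ((ti*tk+1)*(ti+th) + (ti*th+1)*(ti+tk)) * tanh rj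
      + ((ti+tk)*(ti+th)) * tanh rj ^ 2 := by
    rw [← htj]
    have : (ti*tk+1)*(ti*th+1) + ((ti*tk+1)*(ti+th) + (ti*th+1)*(ti+tk)) * tj
        + ((ti+tk)*(ti+th)) * tj ^ 2
        = (ti*tj + ti*tk + tj*tk + 1) * (ti*tj + ti*th + tj*th + 1) := by ring
    rw [this]
    have l1 : 0 < ti*tj + ti*tk + tj*tk + 1 := by linarith [mul_pos h0i h0j, mul_pos h0i h0k, mul_pos h0j h0k]
    have l2 : 0 < ti*tj + ti*th + tj*th + 1 := by linarith [mul_pos h0i h0j, mul_pos h0i h0h, mul_pos h0j h0h]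
    exact mul_pos l1 l2
  have hkey1 : 4 * ((ti*tk+1)*(ti*th+1) + ((ti*tk+1)*(ti+th) + (ti*th+1)*(ti+tk)) * tanh rj
      + ((ti+tk)*(ti+th)) * tanh rj ^ 2)
      - ((2 - ti^2 + ti*tk + ti*th) + (tk + th) * tanh rj + (-1) * tanh rj ^ 2) ^ 2
      = Q2 * (ti + tj) ^ 2 := by
    rw [← htj, hQ2]; ring
  have H1 := aux_arccos (2 - ti^2 + ti*tk + ti*th) (tk + th) (-1)
    ((ti*tk+1)*(ti*th+1)) ((ti*tk+1)*(ti+th) + (ti*th+1)*(ti+tk)) ((ti+tk)*(ti+th))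
    Q2 (ti + tj) rj hP1 hQ2pos (by linarith) hkey1
  have e1 : (fun x : ℝ => arccos ((2 - ti ^ 2 - tanh x ^ 2 + ti * tk + ti * th + tanh x * tk + tanh x * th) /
            (2 * Real.sqrt ((ti * tanh x + ti * tk + tanh x * tk + 1) *
              (ti * tanh x + ti * th + tanh x * th + 1)))))
      = (fun x : ℝ => arccos (((2 - ti^2 + ti*tk + ti*th) + (tk + th) * tanh x + (-1) * tanh x ^ 2) /
            (2 * Real.sqrt ((ti*tk+1)*(ti*th+1) + ((ti*tk+1)*(ti+th) + (ti*th+1)*(ti+tk)) * tanh x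
              + ((ti+tk)*(ti+th)) * tanh x ^ 2)))) := by
    funext x
    rw [show (ti * tanh x + ti * tk + tanh x * tk + 1) * (ti * tanh x + ti * th + tanh x * th + 1)
        = (ti*tk+1)*(ti*th+1) + ((ti*tk+1)*(ti+th) + (ti*th+1)*(ti+tk)) * tanh x
          + ((ti+tk)*(ti+th)) * tanh x ^ 2 from by ring,
       show 2 - ti ^ 2 - tanh x ^ 2 + ti * tk + ti * th + tanh x * tk + tanh x * th
        = (2 - ti^2 + ti*tk + ti*th) + (tk + th) * tanh x + (-1) * tanh x ^ 2 from by ring]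
  rw [← e1] at H1
  -- second arccos term
  have hP2 : 0 < (ti*tk+1)*(ti*tk + ti*th + tk*th + 1)
      + ((ti+tk)*(ti*tk + ti*th + tk*th + 1)) * tanh rj + (0:ℝ) * tanh rj ^ 2 := by
    rw [← htj]
    have : (ti*tk+1)*(ti*tk + ti*th + tk*th + 1) + ((ti+tk)*(ti*tk + ti*th + tk*th + 1)) * tj + (0:ℝ) * tj ^ 2
        = (ti*tj + ti*tk + tj*tk + 1) * (ti*tk + ti*th + tk*th + 1) := by ring
    rw [this]
    have l1 : 0 < ti*tj + ti*tk + tj*tk + 1 := by linarith [mul_pos h0i h0j, mul_pos h0i h0k, mul_pos h0j h0k]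
    have l3 : 0 < ti*tk + ti*th + tk*th + 1 := by linarith [mul_pos h0i h0k, mul_pos h0i h0h, mul_pos h0k h0h]
    exact mul_pos l1 l3
  have hkey2 : 4 * ((ti*tk+1)*(ti*tk + ti*th + tk*th + 1)
      + ((ti+tk)*(ti*tk + ti*th + tk*th + 1)) * tanh rj + (0:ℝ) * tanh rj ^ 2)
      - ((2 - ti^2 - tk^2 + ti*th + tk*th) + (ti + tk) * tanh rj + (0:ℝ) * tanh rj ^ 2) ^ 2
      = Q2 * (ti + tk) ^ 2 := by
    rw [← htj, hQ2]; ring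
  have H2 := aux_arccos (2 - ti^2 - tk^2 + ti*th + tk*th) (ti + tk) 0
    ((ti*tk+1)*(ti*tk + ti*th + tk*th + 1)) ((ti+tk)*(ti*tk + ti*th + tk*th + 1)) 0
    Q2 (ti + tk) rj hP2 hQ2pos (by linarith) hkey2
  have e2 : (fun x : ℝ => arccos ((2 - ti ^ 2 - tk ^ 2 + ti * tanh x + ti * th + tk * tanh x + tk * th) /
            (2 * Real.sqrt ((ti * tk + ti * tanh x + tk * tanh x + 1) *
              (ti * tk + ti * th + tk * th + 1)))))
      = (fun x : ℝ => arccos (((2 - ti^2 - tk^2 + ti*th + tk*th) + (ti + tk) * tanh x + (0:ℝ) * tanh x ^ 2) /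
            (2 * Real.sqrt ((ti*tk+1)*(ti*tk + ti*th + tk*th + 1)
              + ((ti+tk)*(ti*tk + ti*th + tk*th + 1)) * tanh x + (0:ℝ) * tanh x ^ 2)))) := by
    funext x
    rw [show (ti * tk + ti * tanh x + tk * tanh x + 1) * (ti * tk + ti * th + tk * th + 1)
        = (ti*tk+1)*(ti*tk + ti*th + tk*th + 1)
          + ((ti+tk)*(ti*tk + ti*th + tk*th + 1)) * tanh x + (0:ℝ) * tanh x ^ 2 from by ring,
       show 2 - ti ^ 2 - tk ^ 2 + ti * tanh x + ti * th + tk * tanh x + tk * th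
        = (2 - ti^2 - tk^2 + ti*th + tk*th) + (ti + tk) * tanh x + (0:ℝ) * tanh x ^ 2 from by ring]
  rw [← e2] at H2
  -- third arccos term
  have hP3 : 0 < (ti*th+1)*(ti*th + ti*tk + th*tk + 1)
      + ((ti+th)*(ti*th + ti*tk + th*tk + 1)) * tanh rj + (0:ℝ) * tanh rj ^ 2 := by
    rw [← htj]
    have : (ti*th+1)*(ti*th + ti*tk + th*tk + 1) + ((ti+th)*(ti*th + ti*tk + th*tk + 1)) * tj + (0:ℝ) * tj ^ 2
        = (ti*tj + ti*th + tj*th + 1) * (ti*th + ti*tk + th*tk + 1) := by ring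
    rw [this]
    have l2 : 0 < ti*tj + ti*th + tj*th + 1 := by linarith [mul_pos h0i h0j, mul_pos h0i h0h, mul_pos h0j h0h]
    have l3 : 0 < ti*th + ti*tk + th*tk + 1 := by linarith [mul_pos h0i h0k, mul_pos h0i h0h, mul_pos h0k h0h]
    exact mul_pos l2 l3
  have hkey3 : 4 * ((ti*th+1)*(ti*th + ti*tk + th*tk + 1)
      + ((ti+th)*(ti*th + ti*tk + th*tk + 1)) * tanh rj + (0:ℝ) * tanh rj ^ 2)
      - ((2 - ti^2 - th^2 + ti*tk + th*tk) + (ti + th) * tanh rj + (0:ℝ) * tanh rj ^ 2) ^ 2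
      = Q2 * (ti + th) ^ 2 := by
    rw [← htj, hQ2]; ring
  have H3 := aux_arccos (2 - ti^2 - th^2 + ti*tk + th*tk) (ti + th) 0
    ((ti*th+1)*(ti*th + ti*tk + th*tk + 1)) ((ti+th)*(ti*th + ti*tk + th*tk + 1)) 0
    Q2 (ti + th) rj hP3 hQ2pos (by linarith) hkey3
  have e3 : (fun x : ℝ => arccos ((2 - ti ^ 2 - th ^ 2 + ti * tanh x + ti * tk + th * tanh x + th * tk) /
            (2 * Real.sqrt ((ti * th + ti * tanh x + th * tanh x + 1) *
              (ti * th + ti * tk + th * tk + 1)))))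
      = (fun x : ℝ => arccos (((2 - ti^2 - th^2 + ti*tk + th*tk) + (ti + th) * tanh x + (0:ℝ) * tanh x ^ 2) /
            (2 * Real.sqrt ((ti*th+1)*(ti*th + ti*tk + th*tk + 1)
              + ((ti+th)*(ti*th + ti*tk + th*tk + 1)) * tanh x + (0:ℝ) * tanh x ^ 2)))) := by
    funext x
    rw [show (ti * th + ti * tanh x + th * tanh x + 1) * (ti * th + ti * tk + th * tk + 1)
        = (ti*th+1)*(ti*th + ti*tk + th*tk + 1)
          + ((ti+th)*(ti*th + ti*tk + th*tk + 1)) * tanh x + (0:ℝ) * tanh x ^ 2 from by ring,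
       show 2 - ti ^ 2 - th ^ 2 + ti * tanh x + ti * tk + th * tanh x + th * tk
        = (2 - ti^2 - th^2 + ti*tk + th*tk) + (ti + th) * tanh x + (0:ℝ) * tanh x ^ 2 from by ring]
  rw [← e3] at H3
  -- simplify the three derivative values
  have hsQ2 : 0 < Real.sqrt Q2 := Real.sqrt_pos.mpr hQ2pos
  have l1 : 0 < ti*tj + ti*tk + tj*tk + 1 := by
    linarith [mul_pos h0i h0j, mul_pos h0i h0k, mul_pos h0j h0k]
  have l2 : 0 < ti*tj + ti*th + tj*th + 1 := by
    linarith [mul_pos h0i h0j, mul_pos h0i h0h, mul_pos h0j h0h]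
  have l3 : 0 < ti*tk + ti*th + tk*th + 1 := by
    linarith [mul_pos h0i h0k, mul_pos h0i h0h, mul_pos h0k h0h]
  have H1' : HasDerivAt (fun x : ℝ => arccos ((2 - ti ^ 2 - tanh x ^ 2 + ti * tk + ti * th + tanh x * tk + tanh x * th) /
            (2 * Real.sqrt ((ti * tanh x + ti * tk + tanh x * tk + 1) *
              (ti * tanh x + ti * th + tanh x * th + 1)))))
      (-((-4 + th^2 - 2*tk*th + tk^2 - 3*tj*th - 3*tj*tk - 2*tj^2*tk*th - 3*ti*th - 3*ti*tk
          - 6*ti*tj - 4*ti*tj*tk*th - 2*ti*tj^2*th - 2*ti*tj^2*tk + 2*ti^2 - ti^2*th^2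
          - ti^2*tk^2 - ti^2*tj*th - ti^2*tj*tk - 2*ti^2*tj^2 + ti^3*th + ti^3*tk + 2*ti^3*tj)
          * (1 - tj^2)) /
        (2 * ((ti*tj + ti*tk + tj*tk + 1) * (ti*tj + ti*th + tj*th + 1)) * Real.sqrt Q2)) rj := by
    convert H1 using 1
    rw [← htj] at hP1 ⊢
    have hij : (0:ℝ) < ti + tj := by linarith
    field_simp
    ring
  have H2' : HasDerivAt (fun x : ℝ => arccos ((2 - ti ^ 2 - tk ^ 2 + ti * tanh x + ti * th + tk * tanh x + tk * th) /
            (2 * Real.sqrt ((ti * tk + ti * tanh x + tk * tanh x + 1) *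
              (ti * tk + ti * th + tk * th + 1)))))
      (-((2 * (ti*tj + ti*tk + tj*tk + 1) - (2 - ti^2 - tk^2 + ti*tj + ti*th + tk*tj + tk*th))
          * (1 - tj^2)) /
        (2 * (ti*tj + ti*tk + tj*tk + 1) * Real.sqrt Q2)) rj := by
    convert H2 using 1
    rw [← htj] at hP2 ⊢
    have hik : (0:ℝ) < ti + tk := by linarith
    field_simp
    ring
  have H3' : HasDerivAt (fun x : ℝ => arccos ((2 - ti ^ 2 - th ^ 2 + ti * tanh x + ti * tk + th * tanh x + th * tk) /
            (2 * Real.sqrt ((ti * th + ti * tanh x + th * tanh x + 1) *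
              (ti * th + ti * tk + th * tk + 1)))))
      (-((2 * (ti*tj + ti*th + tj*th + 1) - (2 - ti^2 - th^2 + ti*tj + ti*tk + th*tj + th*tk))
          * (1 - tj^2)) /
        (2 * (ti*tj + ti*th + tj*th + 1) * Real.sqrt Q2)) rj := by
    convert H3 using 1
    rw [← htj] at hP3 ⊢
    have hih : (0:ℝ) < ti + th := by linarith
    field_simp
    ring
  -- combine
  have H := (((hasDerivAt_const rj π).sub H1').sub H2').sub H3'
  refine H.congr_deriv ?_
  have hti2 : (1:ℝ) - ti ^ 2 = 1 / Real.cosh ri ^ 2 := by rw [hti, one_sub_tanh_sq]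
  have htj2 : (1:ℝ) - tj ^ 2 = 1 / Real.cosh rj ^ 2 := by rw [htj, one_sub_tanh_sq]
  have step1 : -(Real.cosh rk * Real.cosh rh *
          (2 - (tk - th) ^ 2 + ti * (tj + tk + th) + tj * (ti + tk + th))) /
        (Real.sqrt Q2 * Real.cosh (ri + rj + rk) * Real.cosh (ri + rj + rh))
      = -((1 - ti ^ 2) * (1 - tj ^ 2) *
          (2 - (tk - th) ^ 2 + ti * (tj + tk + th) + tj * (ti + tk + th))) /
        (Real.sqrt Q2 * ((ti*tj + ti*tk + tj*tk + 1) * (ti*tj + ti*th + tj*th + 1))) := by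
    rw [cosh_add3 ri rj rk, cosh_add3 ri rj rh, ← hti, ← htj, ← htk, ← hth, hti2, htj2]
    have ci := (Real.cosh_pos ri).ne'
    have cj := (Real.cosh_pos rj).ne'
    have ck := (Real.cosh_pos rk).ne'
    have ch := (Real.cosh_pos rh).ne'
    field_simp
  rw [step1]
  field_simp
  ring
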